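/- Let M ∈ ℝ^{m×n} be a nonnegative matrix. Then τ_+(M) equals the optimal value of the generalized moment problem inf{μ(ℝ^{m+n}) : μ a finite positive Borel measure on ℝ^{m+n}, ∫ x_i x_j dμ = M_{i,j−m} for all i ∈ U and j ∈ W, Supp(μ) ⊆ K^M}. -/

import Mathlib

open Matrix MeasureTheory
open scoped ENNReal

private lemma sum_comp_embedding {ι κ G : Type*} [Fintype ι] [Fintype κ] [AddCommMonoid G]
    (e : ι ↪ κ) (v : κ → G) (hv : ∀ j, (¬∃ i, e i = j) → v j = 0) :
    ∑ j, v j = ∑ i, v (e i) := by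
  classical
  have h1 : ∑ j ∈ Finset.univ.image e, v j = ∑ i, v (e i) :=
    Finset.sum_image (fun x _ y _ h => e.injective h)
  rw [← h1]
  refine (Finset.sum_subset (Finset.subset_univ _) fun j _ hj => hv j ?_).symm
  simpa [Finset.mem_image] using hj

lemma my_isCompact_convexHull {F : Type*} [NormedAddCommGroup F] [NormedSpace ℝ F]
    [FiniteDimensional ℝ F] {s : Set F} (hs : IsCompact s) :
    IsCompact (convexHull ℝ s) := by
  classical
  rcases s.eq_empty_or_nonempty with rfl | ⟨x₀, hx₀⟩
  · simp [convexHull_empty, isCompact_empty]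
  set d := Module.finrank ℝ F with hd
  set T : (Fin (d+1) → ℝ) × (Fin (d+1) → F) → F := fun p => ∑ i, p.1 i • p.2 i with hT
  have hTc : Continuous T := by
    apply continuous_finset_sum
    intro i _
    exact ((continuous_apply i).comp continuous_fst).smul
      ((continuous_apply i).comp continuous_snd)
  have hC : IsCompact ((stdSimplex ℝ (Fin (d+1))) ×ˢ (Set.univ.pi fun _ : Fin (d+1) => s)) :=
    (isCompact_stdSimplex (𝕜 := ℝ) (ι := Fin (d+1))).prod (isCompact_univ_pi fun _ => hs)
  have himg : convexHull ℝ s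
      = T '' ((stdSimplex ℝ (Fin (d+1))) ×ˢ (Set.univ.pi fun _ : Fin (d+1) => s)) := by
    apply Set.Subset.antisymm
    · intro x hx
      obtain ⟨ι, hι, z, w, hzs, hai, hw0, hw1, hx⟩ := eq_pos_convex_span_of_mem_convexHull hx
      have hcard : Fintype.card ι ≤ Fintype.card (Fin (d + 1)) := by
        simp only [Fintype.card_fin]
        refine hai.card_le_finrank_succ.trans ?_
        have := Submodule.finrank_le (vectorSpan ℝ (Set.range z))
        omega
      obtain ⟨e⟩ : Nonempty (ι ↪ Fin (d+1)) := Function.Embedding.nonempty_of_card_le hcard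
      set w' : Fin (d+1) → ℝ := Function.extend e w 0 with hw'
      set z' : Fin (d+1) → F := Function.extend e z fun _ => x₀ with hz'
      have hwapp : ∀ i, w' (e i) = w i := fun i => e.injective.extend_apply w 0 i
      have hzapp : ∀ i, z' (e i) = z i := fun i => e.injective.extend_apply z _ i
      have hw'0 : ∀ j, 0 ≤ w' j := by
        intro j
        by_cases h : ∃ i, e i = j
        · obtain ⟨i, rfl⟩ := h; rw [hwapp]; exact (hw0 i).le
        · rw [hw', Function.extend_apply' _ _ _ h]; rfl
      have hw'1 : ∑ j, w' j = 1 := by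
        rw [sum_comp_embedding e w'
          (fun j hj => by rw [hw', Function.extend_apply' _ _ _ hj]; rfl)]
        simp only [hwapp]; exact hw1
      have hz's : ∀ j, z' j ∈ s := by
        intro j
        by_cases h : ∃ i, e i = j
        · obtain ⟨i, rfl⟩ := h; rw [hzapp]; exact hzs (Set.mem_range_self i)
        · rw [hz', Function.extend_apply' _ _ _ h]; exact hx₀
      have hTx : T (w', z') = x := by
        show ∑ j, w' j • z' j = x
        rw [sum_comp_embedding e (fun j => w' j • z' j)
          (fun j hj => by
            show Function.extend (⇑e) w 0 j • z' j = 0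
            rw [Function.extend_apply' _ _ _ hj]; simp)]
        simp only [hwapp, hzapp]; exact hx
      exact ⟨(w', z'), ⟨⟨hw'0, hw'1⟩, fun j _ => hz's j⟩, hTx⟩
    · rintro x ⟨⟨w, z⟩, ⟨hw, hz⟩, rfl⟩
      exact (convex_convexHull ℝ s).sum_mem (fun i _ => hw.1 i) hw.2
        (fun i _ => subset_convexHull ℝ s (hz i (Set.mem_univ i)))
  rw [himg]
  exact hC.image hTc

private lemma my_normalize {m n : ℕ} [Nonempty (Fin m)] [Nonempty (Fin n)]
    (M : Matrix (Fin m) (Fin n) ℝ) (Mmax : ℝ)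
    (hM0 : 0 ≤ Mmax) (hub : ∀ i j, M i j ≤ Mmax)
    (a : Fin m → ℝ) (b : Fin n → ℝ) (ha : ∀ i, 0 ≤ a i) (hb : ∀ j, 0 ≤ b j)
    (hab : ∀ i j, a i * b j ≤ M i j) :
    ∃ (a' : Fin m → ℝ) (b' : Fin n → ℝ), (∀ i, 0 ≤ a' i) ∧ (∀ j, 0 ≤ b' j) ∧
      (∀ i, a' i ≤ Real.sqrt Mmax) ∧ (∀ j, b' j ≤ Real.sqrt Mmax) ∧
      (∀ i j, a' i * b' j = a i * b j) := by
  classical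
  set α := Finset.univ.sup' Finset.univ_nonempty a with hα
  set β := Finset.univ.sup' Finset.univ_nonempty b with hβ
  have hale : ∀ i, a i ≤ α := fun i => Finset.le_sup' a (Finset.mem_univ i)
  have hble : ∀ j, b j ≤ β := fun j => Finset.le_sup' b (Finset.mem_univ j)
  have hα0 : 0 ≤ α := (ha (Classical.arbitrary _)).trans (hale _)
  have hβ0 : 0 ≤ β := (hb (Classical.arbitrary _)).trans (hble _)
  have hαβ : α * β ≤ Mmax := by
    obtain ⟨i, -, hi⟩ := Finset.exists_mem_eq_sup' Finset.univ_nonempty a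
    obtain ⟨j, -, hj⟩ := Finset.exists_mem_eq_sup' Finset.univ_nonempty b
    rw [← hα] at hi; rw [← hβ] at hj
    rw [hi, hj]
    exact (hab i j).trans (hub i j)
  have hs0 : (0:ℝ) ≤ Real.sqrt Mmax := Real.sqrt_nonneg _
  rcases eq_or_lt_of_le hα0 with hzero | hαpos
  · refine ⟨0, 0, fun _ => le_rfl, fun _ => le_rfl, fun _ => hs0, fun _ => hs0, fun i j => ?_⟩
    have : a i = 0 := le_antisymm (hzero ▸ hale i) (ha i)
    simp [this]
  rcases eq_or_lt_of_le hβ0 with hzero | hβpos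
  · refine ⟨0, 0, fun _ => le_rfl, fun _ => le_rfl, fun _ => hs0, fun _ => hs0, fun i j => ?_⟩
    have : b j = 0 := le_antisymm (hzero ▸ hble j) (hb j)
    simp [this]
  set c := Real.sqrt (β / α) with hc
  have hcpos : 0 < c := Real.sqrt_pos.2 (div_pos hβpos hαpos)
  have hc2 : c ^ 2 = β / α := Real.sq_sqrt (div_pos hβpos hαpos).le
  refine ⟨fun i => c * a i, fun j => c⁻¹ * b j,
    fun i => mul_nonneg hcpos.le (ha i), fun j => mul_nonneg (inv_nonneg.2 hcpos.le) (hb j),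
    fun i => ?_, fun j => ?_, fun i j => by field_simp⟩
  · rw [Real.le_sqrt (mul_nonneg hcpos.le (ha i)) hM0]
    have h1 : (c * a i) ^ 2 = (β / α) * a i ^ 2 := by rw [mul_pow, hc2]
    have h2 : a i ^ 2 ≤ α ^ 2 := by nlinarith [ha i, hale i]
    calc (c * a i) ^ 2 = (β / α) * a i ^ 2 := h1
      _ ≤ (β / α) * α ^ 2 := by
          apply mul_le_mul_of_nonneg_left h2 (div_nonneg hβ0 hα0)
      _ = α * β := by field_simp
      _ ≤ Mmax := hαβ
  · rw [Real.le_sqrt (mul_nonneg (inv_nonneg.2 hcpos.le) (hb j)) hM0]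
    have h1 : (c⁻¹ * b j) ^ 2 = (α / β) * b j ^ 2 := by
      rw [mul_pow, inv_pow, hc2, inv_div]
    have h2 : b j ^ 2 ≤ β ^ 2 := by nlinarith [hb j, hble j]
    calc (c⁻¹ * b j) ^ 2 = (α / β) * b j ^ 2 := h1
      _ ≤ (α / β) * β ^ 2 := mul_le_mul_of_nonneg_left h2 (div_nonneg hα0 hβ0)
      _ = α * β := by field_simp
      _ ≤ Mmax := hαβ


/-- For a nonnegative matrix `M ∈ ℝ^{m×n}`, the parameter `τ₊(M)` equals
the optimal value of the generalized moment problem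
`inf {μ(ℝ^{m+n}) : ∫ xᵢxⱼ dμ = M_{i,j−m} (i ∈ U, j ∈ W), Supp(μ) ⊆ K^M}` (both computed in
`ℝ≥0∞`).  The `m+n` variables are indexed by `Fin m ⊕ Fin n` (rows `U = inl`,
columns `W = inr`). -/
theorem tau_plus_eq_gmp_value
    (m n : ℕ) (M : Matrix (Fin m) (Fin n) ℝ) (hnn : ∀ i j, 0 ≤ M i j)
    (Mmax : ℝ) (hMmax : IsGreatest {r : ℝ | ∃ i j, M i j = r} Mmax)
    (K : Set (Fin m ⊕ Fin n → ℝ))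
    (hK : K = {x | (∀ v, 0 ≤ Real.sqrt Mmax * x v - (x v) ^ 2) ∧
        (∀ i j, M i j ≠ 0 → 0 ≤ M i j - x (Sum.inl i) * x (Sum.inr j)) ∧
        (∀ i j, M i j = 0 → x (Sum.inl i) * x (Sum.inr j) = 0)}) :
    sInf {v : ℝ≥0∞ | ∃ lam : ℝ, 0 < lam ∧
        lam⁻¹ • M ∈ convexHull ℝ {B : Matrix (Fin m) (Fin n) ℝ |
          ∃ (a : Fin m → ℝ) (b : Fin n → ℝ), (∀ i, 0 ≤ a i) ∧ (∀ j, 0 ≤ b j) ∧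
            (∀ i j, a i * b j ≤ M i j) ∧ B = vecMulVec a b} ∧
        v = ENNReal.ofReal lam}
    = sInf {v : ℝ≥0∞ | ∃ μ : Measure (Fin m ⊕ Fin n → ℝ), IsFiniteMeasure μ ∧
        μ Kᶜ = 0 ∧
        (∀ i j, Integrable (fun x => x (Sum.inl i) * x (Sum.inr j)) μ) ∧
        (∀ i j, ∫ x, x (Sum.inl i) * x (Sum.inr j) ∂μ = M i j) ∧
        v = μ Set.univ} := by
  classical
  obtain ⟨hmem₀, hub'⟩ := hMmax
  obtain ⟨i₀, j₀, hij₀⟩ := hmem₀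
  haveI : Nonempty (Fin m) := ⟨i₀⟩
  haveI : Nonempty (Fin n) := ⟨j₀⟩
  have hub : ∀ i j, M i j ≤ Mmax := fun i j => hub' ⟨i, j, rfl⟩
  have hM0 : 0 ≤ Mmax := hij₀ ▸ hnn i₀ j₀
  have hs0 : (0:ℝ) ≤ Real.sqrt Mmax := Real.sqrt_nonneg _
  -- closedness of K
  have hKclosed : IsClosed K := by
    rw [hK]
    have hEq : {x : Fin m ⊕ Fin n → ℝ | (∀ v, 0 ≤ Real.sqrt Mmax * x v - (x v) ^ 2) ∧
        (∀ i j, M i j ≠ 0 → 0 ≤ M i j - x (Sum.inl i) * x (Sum.inr j)) ∧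
        (∀ i j, M i j = 0 → x (Sum.inl i) * x (Sum.inr j) = 0)}
        = (⋂ v, {x : Fin m ⊕ Fin n → ℝ | 0 ≤ Real.sqrt Mmax * x v - (x v) ^ 2})
          ∩ ((⋂ i, ⋂ j, {x : Fin m ⊕ Fin n → ℝ |
                M i j ≠ 0 → 0 ≤ M i j - x (Sum.inl i) * x (Sum.inr j)})
          ∩ (⋂ i, ⋂ j, {x : Fin m ⊕ Fin n → ℝ |
                M i j = 0 → x (Sum.inl i) * x (Sum.inr j) = 0})) := by
      ext x
      simp only [Set.mem_setOf_eq, Set.mem_inter_iff, Set.mem_iInter]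
    rw [hEq]
    refine IsClosed.inter (isClosed_iInter fun v => ?_)
      (IsClosed.inter (isClosed_iInter fun i => isClosed_iInter fun j => ?_)
        (isClosed_iInter fun i => isClosed_iInter fun j => ?_))
    · exact isClosed_le continuous_const
        ((continuous_const.mul (continuous_apply v)).sub ((continuous_apply v).pow 2))
    · by_cases h : M i j = 0
      · simp only [h, ne_eq, not_true_eq_false, false_implies, Set.setOf_true]
        exact isClosed_univ
      · simp only [h, ne_eq, not_false_eq_true, true_implies]
        exact isClosed_le continuous_const
          (continuous_const.sub ((continuous_apply (Sum.inl i)).mul (continuous_apply (Sum.inr j))))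
    · by_cases h : M i j = 0
      · simp only [h, true_implies]
        exact isClosed_eq ((continuous_apply (Sum.inl i)).mul (continuous_apply (Sum.inr j))) continuous_const
      · simp only [h, false_implies, Set.setOf_true]
        exact isClosed_univ
  have hKbd : ∀ x ∈ K, ∀ v, 0 ≤ x v ∧ x v ≤ Real.sqrt Mmax := by
    intro x hx v
    rw [hK] at hx
    have h := hx.1 v
    constructor
    · by_contra hneg
      push_neg at hneg
      nlinarith [mul_nonneg hs0 (neg_nonneg.2 hneg.le)]
    · by_contra hgt
      push_neg at hgt
      have hxv : 0 < x v := lt_of_le_of_lt hs0 hgt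
      nlinarith
  have hKcomp : IsCompact K := by
    refine IsCompact.of_isClosed_subset
      (isCompact_univ_pi fun _ : Fin m ⊕ Fin n => isCompact_Icc
        (a := (0:ℝ)) (b := Real.sqrt Mmax)) hKclosed ?_
    intro x hx
    exact fun v _ => ⟨(hKbd x hx v).1, (hKbd x hx v).2⟩
  apply le_antisymm
  · -- direction B : tau ≤ moment value
    refine le_sInf ?_
    rintro v ⟨μ, hfin, hKc, hint, hmom, rfl⟩
    by_cases h0 : μ Set.univ = 0
    · have hμ0 : μ = 0 := Measure.measure_univ_eq_zero.mp h0
      have hM : ∀ i j, M i j = 0 := by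
        intro i j
        rw [← hmom i j, hμ0]
        simp
      rw [h0]
      refine ENNReal.le_of_forall_pos_le_add fun ε hε _ => ?_
      have hmemS : (ENNReal.ofReal (ε : ℝ)) ∈ {v : ℝ≥0∞ | ∃ lam : ℝ, 0 < lam ∧
          lam⁻¹ • M ∈ convexHull ℝ {B : Matrix (Fin m) (Fin n) ℝ |
            ∃ (a : Fin m → ℝ) (b : Fin n → ℝ), (∀ i, 0 ≤ a i) ∧ (∀ j, 0 ≤ b j) ∧
              (∀ i j, a i * b j ≤ M i j) ∧ B = vecMulVec a b} ∧
          v = ENNReal.ofReal lam} := by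
        refine ⟨(ε : ℝ), by exact_mod_cast hε, ?_, rfl⟩
        have hMzero : (ε : ℝ)⁻¹ • M = vecMulVec (0 : Fin m → ℝ) (0 : Fin n → ℝ) := by
          ext i j
          simp [hM i j, vecMulVec_apply]
        rw [hMzero]
        exact subset_convexHull ℝ _ ⟨0, 0, fun _ => le_rfl, fun _ => le_rfl,
          fun i j => by simpa using hnn i j, rfl⟩
      calc sInf _ ≤ ENNReal.ofReal (ε : ℝ) := sInf_le hmemS
        _ = (ε : ℝ≥0∞) := ENNReal.ofReal_coe_nnreal
        _ ≤ 0 + ε := by simp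
    · set lam := (μ Set.univ).toReal with hlam
      have hnetop : μ Set.univ ≠ ⊤ := hfin.measure_univ_lt_top.ne
      have hlampos : 0 < lam := ENNReal.toReal_pos h0 hnetop
      refine sInf_le ⟨lam, hlampos, ?_, (ENNReal.ofReal_toReal hnetop).symm⟩
      set c : ℝ≥0∞ := (μ Set.univ)⁻¹ with hc
      have hcnetop : c ≠ ⊤ := by rw [hc]; exact ENNReal.inv_ne_top.2 h0
      set μ' := c • μ with hμ'
      haveI : IsProbabilityMeasure μ' := ⟨by
        rw [hμ', Measure.smul_apply, smul_eq_mul, hc, ENNReal.inv_mul_cancel h0 hnetop]⟩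
      set g : (Fin m ⊕ Fin n → ℝ) → (Fin m → Fin n → ℝ) :=
        fun x i j => x (Sum.inl i) * x (Sum.inr j) with hg
      have hgc : Continuous g := continuous_pi fun i => continuous_pi fun j =>
        (continuous_apply (Sum.inl i)).mul (continuous_apply (Sum.inr j))
      have hsumint : Integrable
          (fun x : Fin m ⊕ Fin n → ℝ =>
            ∑ i : Fin m, ∑ j : Fin n, |x (Sum.inl i) * x (Sum.inr j)|) μ :=
        integrable_finset_sum _ fun i _ => integrable_finset_sum _ fun j _ => (hint i j).abs
      have hgintμ : Integrable g μ := by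
        refine Integrable.mono' hsumint hgc.aestronglyMeasurable ?_
        refine Filter.Eventually.of_forall fun x => ?_
        have hnn' : (0:ℝ) ≤ ∑ i : Fin m, ∑ j : Fin n, |x (Sum.inl i) * x (Sum.inr j)| :=
          Finset.sum_nonneg fun i _ => Finset.sum_nonneg fun j _ => abs_nonneg _
        rw [pi_norm_le_iff_of_nonneg hnn']
        intro i
        rw [pi_norm_le_iff_of_nonneg hnn']
        intro j
        rw [Real.norm_eq_abs]
        calc |x (Sum.inl i) * x (Sum.inr j)|
            ≤ ∑ j' : Fin n, |x (Sum.inl i) * x (Sum.inr j')| :=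
              Finset.single_le_sum (f := fun j' : Fin n => |x (Sum.inl i) * x (Sum.inr j')|)
                (fun j' _ => abs_nonneg _) (Finset.mem_univ j)
          _ ≤ ∑ i' : Fin m, ∑ j' : Fin n, |x (Sum.inl i') * x (Sum.inr j')| :=
              Finset.single_le_sum
                (f := fun i' : Fin m => ∑ j' : Fin n, |x (Sum.inl i') * x (Sum.inr j')|)
                (fun i' _ => Finset.sum_nonneg fun j' _ => abs_nonneg _) (Finset.mem_univ i)
      have hgint : Integrable g μ' := by
        rw [hμ']
        exact hgintμ.smul_measure hcnetop
      have haeK : ∀ᵐ x ∂μ', x ∈ K := by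
        rw [ae_iff]
        have : {x : Fin m ⊕ Fin n → ℝ | ¬ x ∈ K} = Kᶜ := rfl
        rw [this, hμ', Measure.smul_apply, hKc, smul_eq_mul, mul_zero]
      have hmemhull : (∫ x, g x ∂μ') ∈ convexHull ℝ (g '' K) := by
        refine Convex.integral_mem (convex_convexHull ℝ _)
          (my_isCompact_convexHull (hKcomp.image hgc)).isClosed ?_ hgint
        exact haeK.mono fun x hx => subset_convexHull ℝ _ ⟨x, hx, rfl⟩
      have hentry : ∀ i j, (∫ x, g x ∂μ') i j = lam⁻¹ * M i j := by
        intro i j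
        set φ : (Fin m → Fin n → ℝ) →L[ℝ] ℝ :=
          LinearMap.toContinuousLinearMap
            ((LinearMap.proj j : (Fin n → ℝ) →ₗ[ℝ] ℝ).comp
              (LinearMap.proj i : (Fin m → Fin n → ℝ) →ₗ[ℝ] (Fin n → ℝ))) with hφ
        have hcomm := φ.integral_comp_comm hgint
        have hφapply : ∀ A : Fin m → Fin n → ℝ, φ A = A i j := fun A => rfl
        have h1 : (∫ x, g x ∂μ') i j = ∫ x, g x i j ∂μ' :=
          calc (∫ x, g x ∂μ') i j = φ (∫ x, g x ∂μ') := rfl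
            _ = ∫ x, φ (g x) ∂μ' := hcomm.symm
            _ = ∫ x, g x i j ∂μ' := rfl
        rw [h1]
        have h2 : ∫ x, g x i j ∂μ' = c.toReal • ∫ x, x (Sum.inl i) * x (Sum.inr j) ∂μ := by
          rw [hμ', hg]
          exact integral_smul_measure _ _
        rw [h2, hmom i j, hc, smul_eq_mul, ENNReal.toReal_inv]
      set L : (Fin m → Fin n → ℝ) →ₗ[ℝ] Matrix (Fin m) (Fin n) ℝ :=
        { toFun := fun A => Matrix.of A,
          map_add' := fun _ _ => rfl,
          map_smul' := fun _ _ => rfl } with hL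
      have h1 : L (∫ x, g x ∂μ') ∈ convexHull ℝ (L '' (g '' K)) := by
        rw [← LinearMap.image_convexHull]
        exact ⟨_, hmemhull, rfl⟩
      have h2 : L '' (g '' K) ⊆ {B : Matrix (Fin m) (Fin n) ℝ |
          ∃ (a : Fin m → ℝ) (b : Fin n → ℝ), (∀ i, 0 ≤ a i) ∧ (∀ j, 0 ≤ b j) ∧
            (∀ i j, a i * b j ≤ M i j) ∧ B = vecMulVec a b} := by
        rintro B ⟨A, ⟨x, hxK, rfl⟩, rfl⟩
        refine ⟨fun i => x (Sum.inl i), fun j => x (Sum.inr j),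
          fun i => (hKbd x hxK (Sum.inl i)).1, fun j => (hKbd x hxK (Sum.inr j)).1,
          ?_, ?_⟩
        · intro i j
          rw [hK] at hxK
          by_cases hMij : M i j = 0
          · rw [hxK.2.2 i j hMij, hMij]
          · linarith [hxK.2.1 i j hMij]
        · ext i j
          rfl
      have h3 : L (∫ x, g x ∂μ') = lam⁻¹ • M := by
        ext i j
        have : L (∫ x, g x ∂μ') i j = (∫ x, g x ∂μ') i j := rfl
        rw [this, hentry i j]
        simp [Matrix.smul_apply, smul_eq_mul]
      rw [← h3]
      exact convexHull_mono h2 h1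
  · -- direction A : moment value ≤ tau
    refine le_sInf ?_
    rintro v ⟨lam, hlam, hmem, rfl⟩
    rw [convexHull_eq] at hmem
    obtain ⟨ι, t, w, z, hw0, hw1, hz, hcm⟩ := hmem
    have hpt : ∀ k : {k // k ∈ t}, ∃ p : Fin m ⊕ Fin n → ℝ, p ∈ K ∧
        ∀ i j, p (Sum.inl i) * p (Sum.inr j) = z k.1 i j := by
      rintro ⟨k, hk⟩
      obtain ⟨a, b, ha, hb, hab, hzk⟩ := hz k hk
      obtain ⟨a', b', ha', hb', haub, hbub, heq⟩ :=
        my_normalize M Mmax hM0 hub a b ha hb hab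
      refine ⟨Sum.elim a' b', ?_, ?_⟩
      · rw [hK]
        refine ⟨fun v => ?_, fun i j _ => ?_, fun i j hij => ?_⟩
        · cases v with
          | inl i => simp only [Sum.elim_inl]; nlinarith [ha' i, haub i]
          | inr j => simp only [Sum.elim_inr]; nlinarith [hb' j, hbub j]
        · simp only [Sum.elim_inl, Sum.elim_inr]
          rw [heq]
          linarith [hab i j]
        · simp only [Sum.elim_inl, Sum.elim_inr]
          rw [heq]
          exact le_antisymm (hij ▸ hab i j) (mul_nonneg (ha i) (hb j))
      · intro i j
        simp [heq, hzk, vecMulVec_apply]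
    choose p hpK hpz using hpt
    set μ : Measure (Fin m ⊕ Fin n → ℝ) :=
      ∑ k ∈ t.attach, (ENNReal.ofReal (lam * w k.1)) • Measure.dirac (p k) with hμ
    have happ : ∀ s : Set (Fin m ⊕ Fin n → ℝ),
        μ s = ∑ k ∈ t.attach, ENNReal.ofReal (lam * w k.1) * Measure.dirac (p k) s := by
      intro s
      rw [hμ, Measure.finset_sum_apply]
      simp only [Measure.smul_apply, smul_eq_mul]
    have hw0' : ∀ k ∈ t, 0 ≤ lam * w k := fun k hk => mul_nonneg hlam.le (hw0 k hk)
    have hμuniv : μ Set.univ = ENNReal.ofReal lam := by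
      rw [happ]
      simp only [Measure.dirac_apply_of_mem (Set.mem_univ _), mul_one]
      rw [← ENNReal.ofReal_sum_of_nonneg (fun k _ => hw0' k.1 k.2)]
      congr 1
      rw [Finset.sum_attach t (fun k => lam * w k), ← Finset.mul_sum, hw1, mul_one]
    haveI hμfin : IsFiniteMeasure μ := ⟨by rw [hμuniv]; exact ENNReal.ofReal_lt_top⟩
    have hμKc : μ Kᶜ = 0 := by
      rw [happ]
      refine Finset.sum_eq_zero fun k _ => ?_
      rw [Measure.dirac_apply' _ hKclosed.measurableSet.compl,
        Set.indicator_of_notMem (by simpa using hpK k)]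
      simp
    have hμint : ∀ i j, Integrable (fun x : Fin m ⊕ Fin n → ℝ =>
        x (Sum.inl i) * x (Sum.inr j)) μ := by
      intro i j
      rw [hμ, integrable_finset_sum_measure]
      intro k _
      refine Integrable.smul_measure ?_ ENNReal.ofReal_ne_top
      refine ⟨((continuous_apply (Sum.inl i)).mul
        (continuous_apply (Sum.inr j))).aestronglyMeasurable, ?_⟩
      show (∫⁻ a, ‖a (Sum.inl i) * a (Sum.inr j)‖₊ ∂Measure.dirac (p k)) < ⊤
      rw [lintegral_dirac]
      exact ENNReal.coe_lt_top
    have hμmom : ∀ i j, ∫ x, x (Sum.inl i) * x (Sum.inr j) ∂μ = M i j := by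
      intro i j
      have hIk : ∀ k ∈ t.attach, Integrable (fun x : Fin m ⊕ Fin n → ℝ =>
          x (Sum.inl i) * x (Sum.inr j))
          ((ENNReal.ofReal (lam * w k.1)) • Measure.dirac (p k)) := by
        intro k _
        have := hμint i j
        rw [hμ, integrable_finset_sum_measure] at this
        exact this k (Finset.mem_attach t k)
      rw [hμ, integral_finset_sum_measure hIk]
      simp only [integral_smul_measure, integral_dirac, smul_eq_mul]
      have : ∀ k : {k // k ∈ t}, (ENNReal.ofReal (lam * w k.1)).toReal
          * (p k (Sum.inl i) * p k (Sum.inr j)) = lam * (w k.1 * z k.1 i j) := by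
        intro k
        rw [ENNReal.toReal_ofReal (hw0' k.1 k.2), hpz k i j, mul_assoc]
      rw [Finset.sum_congr rfl fun k _ => this k]
      rw [← Finset.mul_sum]
      rw [Finset.sum_attach t (fun k => w k * z k i j)]
      have hcm' : (t.centerMass w z) i j = lam⁻¹ * M i j := by
        rw [hcm]; simp [Matrix.smul_apply, smul_eq_mul]
      rw [Finset.centerMass_eq_of_sum_1 _ _ hw1] at hcm'
      have hsum_apply : (∑ k ∈ t, w k • z k) i j = ∑ k ∈ t, w k * z k i j := by
        rw [Matrix.sum_apply]
        simp [Matrix.smul_apply, smul_eq_mul]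
      rw [hsum_apply] at hcm'
      rw [hcm']
      field_simp
    refine sInf_le ⟨μ, hμfin, hμKc, hμint, hμmom, hμuniv.symm⟩
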